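/- Let x and y be nonzero real numbers, and let (r₁, r₂, r₃, r₄) be a planar non-collinear central configuration with multiplier ξ ≠ 0 for the masses (x, −x, y, −y) (masses x, −x, y, −y at r₁, r₂, r₃, r₄ respectively). Then x(r₂ − r₁) = y(r₃ − r₄); in particular the configuration is a trapezoid: the segments [r₁, r₂] and [r₃, r₄] are parallel, with length ratio ‖r₂ − r₁‖/‖r₃ − r₄‖ = |y|/|x|. -/

import Mathlib

/-- The gravitational acceleration of body `i` in a planar `N`-body configuration
with masses `m` and positions `r`. -/
noncomputable def accel {N : ℕ} (m : Fin N → ℝ) (r : Fin N → EuclideanSpace ℝ (Fin 2))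
    (i : Fin N) : EuclideanSpace ℝ (Fin 2) :=
  ∑ j ∈ Finset.univ.erase i, (m j / ‖r j - r i‖ ^ 3) • (r j - r i)

/-- The configuration is central with multiplier `ξ`:
`γ_j - γ_i = ξ • (r_j - r_i)` for all `i`, `j`. -/
def IsCentral {N : ℕ} (m : Fin N → ℝ) (r : Fin N → EuclideanSpace ℝ (Fin 2)) (ξ : ℝ) : Prop :=
  ∀ i j, accel m r j - accel m r i = ξ • (r j - r i)

/-- A planar non-collinear central configuration with nonzero multiplier for the
masses x, -x, y, -y satisfies x(r₂ - r₁) = y(r₃ - r₄); in particular it is a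
trapezoid: the segments [r₁, r₂] and [r₃, r₄] are parallel, with length ratio
‖r₂ - r₁‖ / ‖r₃ - r₄‖ = |y| / |x|. -/
theorem central_config_nonzero_multiplier_is_trapezoid
    (x y : ℝ) (hx : x ≠ 0) (hy : y ≠ 0)
    (r : Fin 4 → EuclideanSpace ℝ (Fin 2))
    (hinj : Function.Injective r)
    (hnc : ¬ Collinear ℝ (Set.range r))
    (ξ : ℝ) (hξ : ξ ≠ 0)
    (hc : IsCentral ![x, -x, y, -y] r ξ) :
    x • (r 1 - r 0) = y • (r 2 - r 3) ∧
    ‖r 1 - r 0‖ / ‖r 2 - r 3‖ = |y| / |x| := by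
  set m : Fin 4 → ℝ := ![x, -x, y, -y] with hm
  have haccel : ∀ i : Fin 4, accel m r i = ∑ j, (m j / ‖r j - r i‖ ^ 3) • (r j - r i) := by
    intro i
    rw [accel, Finset.sum_erase]
    simp
  have hS0 : x • accel m r 0 + (-x) • accel m r 1 + y • accel m r 2 + (-y) • accel m r 3 = 0 := by
    have e01 : ‖r 0 - r 1‖ = ‖r 1 - r 0‖ := norm_sub_rev _ _
    have e02 : ‖r 0 - r 2‖ = ‖r 2 - r 0‖ := norm_sub_rev _ _
    have e03 : ‖r 0 - r 3‖ = ‖r 3 - r 0‖ := norm_sub_rev _ _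
    have e12 : ‖r 1 - r 2‖ = ‖r 2 - r 1‖ := norm_sub_rev _ _
    have e13 : ‖r 1 - r 3‖ = ‖r 3 - r 1‖ := norm_sub_rev _ _
    have e23 : ‖r 2 - r 3‖ = ‖r 3 - r 2‖ := norm_sub_rev _ _
    simp only [haccel]
    simp only [haccel, Fin.sum_univ_four, e01, e02, e03, e12, e13, e23, sub_self, norm_zero,
      smul_zero, hm, Matrix.cons_val_zero, Matrix.cons_val_one, Matrix.head_cons,
      Matrix.cons_val_two, Matrix.tail_cons, Matrix.cons_val_three]
    module
  have h1 := hc 0 1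
  have h2 := hc 0 2
  have h3 := hc 0 3
  have key : ξ • (x • (r 1 - r 0) - y • (r 2 - r 3)) = 0 := by
    linear_combination (norm := module) -hS0 - x • h1 + y • h2 - y • h3
  have key2 : x • (r 1 - r 0) - y • (r 2 - r 3) = 0 := by
    rcases smul_eq_zero.mp key with h | h
    · exact absurd h hξ
    · exact h
  have hpar : x • (r 1 - r 0) = y • (r 2 - r 3) := sub_eq_zero.mp key2
  refine ⟨hpar, ?_⟩
  have h23 : r 2 - r 3 ≠ 0 := sub_ne_zero.mpr (hinj.ne (by decide))
  have hn23 : ‖r 2 - r 3‖ ≠ 0 := norm_ne_zero_iff.mpr h23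
  have hnorm : |x| * ‖r 1 - r 0‖ = |y| * ‖r 2 - r 3‖ := by
    have := congrArg norm hpar
    simpa [norm_smul, Real.norm_eq_abs] using this
  rw [div_eq_div_iff hn23 (abs_ne_zero.mpr hx)]
  linarith [hnorm]
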